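/- arXiv:1803.01370 — 5 statements merged into one kernel-verified Lean document; each statement's English description precedes it below -/
import Mathlib

section
/- Let g : ℝ^d → ℝ be convex, let H be a symmetric d×d matrix with ⟨p, Hp⟩ ≤ c₁‖p‖² for all p (c₁ > 0), let w ∈ ℝ^d, and define Q(p) := ⟨∇f̃(w), p⟩ + ½⟨p, Hp⟩ + g(w + p) − g(w). Fix σ₀ ∈ (0,1), a current point p⁽ⁱ⁾ ∈ ℝ^d, and ψ ≥ c₁/(2 − σ₀). Let v := ∇f̃(w) + H p⁽ⁱ⁾ and let d* minimize Q̂_ψ(d) := ⟨v, d⟩ + (ψ/2)‖d‖² + g(w + p⁽ⁱ⁾ + d) − g(w + p⁽ⁱ⁾) over ℝ^d. Then the sufficient-decrease condition Q(p⁽ⁱ⁾ + d*) ≤ Q(p⁽ⁱ⁾) − (ψσ₀/2)‖d*‖² holds. -/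
open RealInnerProductSpace Matrix

/-- if `ψ ≥ c₁/(2 − σ₀)`, the SpaRSA inner step `d*` (the minimizer of
the prox subproblem `Q̂_ψ` at `p⁽ⁱ⁾`, whose smooth-part gradient at `0` is
`v = ∇f̃(w) + Hp⁽ⁱ⁾`) satisfies the sufficient-decrease condition
`Q(p⁽ⁱ⁾ + d*) ≤ Q(p⁽ⁱ⁾) − (ψσ₀/2)‖d*‖²` for the quadratic model
`Q(p) = ⟨∇f̃(w), p⟩ + ½⟨p, Hp⟩ + g(w + p) − g(w)`. Here `gradfw` denotes the
gradient `∇f̃(w)` of the smooth part at the fixed point `w`. -/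
theorem sparsa_sufficient_decrease_acceptance
    (dim : ℕ) (c₁ : ℝ) (hc₁ : 0 < c₁)
    (g : EuclideanSpace ℝ (Fin dim) → ℝ) (hg : ConvexOn ℝ Set.univ g)
    (H : Matrix (Fin dim) (Fin dim) ℝ) (hsymm : H.IsSymm)
    (hupper : ∀ p : EuclideanSpace ℝ (Fin dim),
      ⟪p, Matrix.toEuclideanLin H p⟫ ≤ c₁ * ‖p‖ ^ 2)
    (w gradfw : EuclideanSpace ℝ (Fin dim))
    (Q : EuclideanSpace ℝ (Fin dim) → ℝ)
    (hQ : ∀ p, Q p = ⟪gradfw, p⟫ + (1 / 2) * ⟪p, Matrix.toEuclideanLin H p⟫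
      + g (w + p) - g w)
    (σ₀ : ℝ) (hσ₀ : σ₀ ∈ Set.Ioo (0 : ℝ) 1)
    (pi : EuclideanSpace ℝ (Fin dim))
    (ψ : ℝ) (hψ : ψ ≥ c₁ / (2 - σ₀))
    (v : EuclideanSpace ℝ (Fin dim)) (hv : v = gradfw + Matrix.toEuclideanLin H pi)
    (Qhat : EuclideanSpace ℝ (Fin dim) → ℝ)
    (hQhat : ∀ q, Qhat q = ⟪v, q⟫ + (ψ / 2) * ‖q‖ ^ 2 + g (w + pi + q) - g (w + pi))
    (dstar : EuclideanSpace ℝ (Fin dim))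
    (hmin : ∀ q, Qhat dstar ≤ Qhat q) :
    Q (pi + dstar) ≤ Q pi - (ψ * σ₀ / 2) * ‖dstar‖ ^ 2 := by
  obtain ⟨hσ0, hσ1⟩ := hσ₀
  have h2σ : (0:ℝ) < 2 - σ₀ := by linarith
  have hψpos : 0 < ψ := lt_of_lt_of_le (div_pos hc₁ h2σ) hψ
  have hc₁ψ : c₁ ≤ ψ * (2 - σ₀) := by
    have := (div_le_iff₀ h2σ).mp hψ
    linarith
  set T := Matrix.toEuclideanLin H with hT
  have hTsym : ∀ x y : EuclideanSpace ℝ (Fin dim), ⟪T x, y⟫ = ⟪x, T y⟫ := by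
    have hherm : H.IsHermitian := by
      rwa [Matrix.IsHermitian, Matrix.conjTranspose_eq_transpose_of_trivial]
    exact Matrix.isHermitian_iff_isSymmetric.mp hherm
  -- Step 1: the minimum value of Qhat is at most -(ψ/2)‖dstar‖².
  have hNnn : (0:ℝ) ≤ ‖dstar‖ ^ 2 := by positivity
  have hstep : ∀ t ∈ Set.Ioo (0:ℝ) 1, Qhat dstar ≤ -(ψ/2) * t * ‖dstar‖ ^ 2 := by
    intro t ⟨ht0, ht1⟩
    have hconv := hg.2 (Set.mem_univ (w + pi + dstar)) (Set.mem_univ (w + pi))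
      (le_of_lt ht0) (by linarith : (0:ℝ) ≤ 1 - t) (by ring)
    have heq : t • (w + pi + dstar) + (1 - t) • (w + pi) = w + pi + t • dstar := by
      module
    rw [heq] at hconv
    simp only [smul_eq_mul] at hconv
    have h1 := hmin (t • dstar)
    rw [hQhat, hQhat] at h1
    rw [real_inner_smul_right] at h1
    have hn : ‖t • dstar‖ ^ 2 = t ^ 2 * ‖dstar‖ ^ 2 := by
      rw [norm_smul, mul_pow]
      simp [abs_of_pos ht0, sq_abs]
    rw [hn] at h1
    have h3 : (1 - t) * (⟪v, dstar⟫ + g (w + pi + dstar) - g (w + pi))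
        ≤ (1 - t) * (-(ψ/2) * (1 + t) * ‖dstar‖ ^ 2) := by nlinarith [h1, hconv]
    have h4 := le_of_mul_le_mul_left
      (by linarith [h3] : (1 - t) * (⟪v, dstar⟫ + g (w + pi + dstar) - g (w + pi))
        ≤ (1 - t) * (-(ψ/2) * (1 + t) * ‖dstar‖ ^ 2)) (by linarith : (0:ℝ) < 1 - t)
    rw [hQhat]
    nlinarith [h4]
  have key : Qhat dstar ≤ -(ψ/2) * ‖dstar‖ ^ 2 := by
    have htend : Filter.Tendsto (fun t : ℝ => -(ψ/2) * t * ‖dstar‖ ^ 2)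
        (nhdsWithin 1 (Set.Ioo (0:ℝ) 1)) (nhds (-(ψ/2) * ‖dstar‖ ^ 2)) := by
      have hcont : Continuous fun t : ℝ => -(ψ/2) * t * ‖dstar‖ ^ 2 :=
        (continuous_const.mul continuous_id).mul continuous_const
      have h5 : Filter.Tendsto (fun t : ℝ => -(ψ/2) * t * ‖dstar‖ ^ 2)
          (nhdsWithin 1 (Set.Ioo (0:ℝ) 1)) (nhds (-(ψ/2) * 1 * ‖dstar‖ ^ 2)) :=
        (hcont.tendsto 1).mono_left nhdsWithin_le_nhds
      simpa using h5
    haveI : (nhdsWithin (1:ℝ) (Set.Ioo (0:ℝ) 1)).NeBot := by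
      apply mem_closure_iff_nhdsWithin_neBot.mp
      rw [closure_Ioo (by norm_num : (0:ℝ) ≠ 1)]
      exact ⟨by norm_num, le_refl 1⟩
    exact ge_of_tendsto htend (Filter.eventually_of_mem self_mem_nhdsWithin hstep)
  -- Step 2: relate Q and Qhat.
  have hexp : Q (pi + dstar) = Q pi + Qhat dstar - (ψ/2) * ‖dstar‖ ^ 2
      + (1/2) * ⟪dstar, T dstar⟫ := by
    rw [hQ, hQ, hQhat, hv]
    have hTadd : T (pi + dstar) = T pi + T dstar := map_add T pi dstar
    have hcomm : ⟪dstar, T pi⟫ = ⟪pi, T dstar⟫ := by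
      rw [← hTsym pi dstar, real_inner_comm]
    rw [hTadd]
    simp only [inner_add_left, inner_add_right]
    rw [hcomm, hTsym pi dstar]
    have : w + (pi + dstar) = w + pi + dstar := by abel
    rw [this]
    ring
  have hquad := hupper dstar
  rw [hexp]
  nlinarith [key, hquad]
end

section
/- Let g : ℝ^d → ℝ be convex, let H be a symmetric d×d matrix with c₂I ⪯ H ⪯ c₁I (0 < c₂ ≤ c₁), fix w ∈ ℝ^d, and define Q(p) := ⟨∇f̃(w), p⟩ + ½⟨p, Hp⟩ + g(w + p) − g(w), which attains its minimum value Q*. Fix p⁽ⁱ⁾ ∈ ℝ^d and ψ > 0, let v := ∇f̃(w) + H p⁽ⁱ⁾, let d* minimize Q̂_ψ(d) := ⟨v, d⟩ + (ψ/2)‖d‖² + g(w + p⁽ⁱ⁾ + d) − g(w + p⁽ⁱ⁾), and set p⁽ⁱ⁺¹⁾ := p⁽ⁱ⁾ + d*. Then Q(p⁽ⁱ⁺¹⁾) − Q* ≤ ((c₁² + ψ²)/c₂) ‖d*‖². -/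
open RealInnerProductSpace Matrix

set_option maxHeartbeats 1000000 in
/-- one SpaRSA inner step controls the model optimality gap:
`Q(p⁽ⁱ⁺¹⁾) − Q* ≤ ((c₁² + ψ²)/c₂)‖d*‖²`, where `p⁽ⁱ⁺¹⁾ = p⁽ⁱ⁾ + d*` and `d*`
minimizes the prox subproblem `Q̂_ψ` at `p⁽ⁱ⁾`. Here `gradfw` denotes the
gradient `∇f̃(w)` of the smooth part at the fixed point `w`. -/
theorem sparsa_gap_bounded_by_step_norm
    (dim : ℕ) (c₁ c₂ : ℝ) (hc₂ : 0 < c₂) (hc : c₂ ≤ c₁)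
    (g : EuclideanSpace ℝ (Fin dim) → ℝ) (hg : ConvexOn ℝ Set.univ g)
    (H : Matrix (Fin dim) (Fin dim) ℝ) (hsymm : H.IsSymm)
    (hlower : ∀ p : EuclideanSpace ℝ (Fin dim),
      c₂ * ‖p‖ ^ 2 ≤ ⟪p, Matrix.toEuclideanLin H p⟫)
    (hupper : ∀ p : EuclideanSpace ℝ (Fin dim),
      ⟪p, Matrix.toEuclideanLin H p⟫ ≤ c₁ * ‖p‖ ^ 2)
    (w gradfw : EuclideanSpace ℝ (Fin dim))
    (Q : EuclideanSpace ℝ (Fin dim) → ℝ)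
    (hQ : ∀ p, Q p = ⟪gradfw, p⟫ + (1 / 2) * ⟪p, Matrix.toEuclideanLin H p⟫
      + g (w + p) - g w)
    (Qstar : ℝ) (pmin : EuclideanSpace ℝ (Fin dim))
    (hlb : ∀ p, Qstar ≤ Q p) (hatt : Q pmin = Qstar)
    (pi : EuclideanSpace ℝ (Fin dim)) (ψ : ℝ) (hψ : 0 < ψ)
    (v : EuclideanSpace ℝ (Fin dim)) (hv : v = gradfw + Matrix.toEuclideanLin H pi)
    (Qhat : EuclideanSpace ℝ (Fin dim) → ℝ)
    (hQhat : ∀ q, Qhat q = ⟪v, q⟫ + (ψ / 2) * ‖q‖ ^ 2 + g (w + pi + q) - g (w + pi))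
    (dstar : EuclideanSpace ℝ (Fin dim))
    (hmin : ∀ q, Qhat dstar ≤ Qhat q) :
    Q (pi + dstar) - Qstar ≤ ((c₁ ^ 2 + ψ ^ 2) / c₂) * ‖dstar‖ ^ 2 := by
  have hc₁ : (0:ℝ) < c₁ := lt_of_lt_of_le hc₂ hc
  -- symmetry of the linear map
  have hsym : ∀ x y : EuclideanSpace ℝ (Fin dim),
      ⟪Matrix.toEuclideanLin H x, y⟫ = ⟪x, Matrix.toEuclideanLin H y⟫ := by
    have hherm : H.IsHermitian := by
      rw [Matrix.IsHermitian, Matrix.conjTranspose_eq_transpose_of_trivial]; exact hsymm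
    exact Matrix.isHermitian_iff_isSymmetric.1 hherm
  -- Cauchy–Schwarz for the PSD form
  have hCS : ∀ x y : EuclideanSpace ℝ (Fin dim),
      ⟪x, Matrix.toEuclideanLin H y⟫ ^ 2
        ≤ ⟪x, Matrix.toEuclideanLin H x⟫ * ⟪y, Matrix.toEuclideanLin H y⟫ := by
    intro x y
    have hpos : ∀ t : ℝ, 0 ≤ ⟪y, Matrix.toEuclideanLin H y⟫ * (t * t)
        + (2 * ⟪x, Matrix.toEuclideanLin H y⟫) * t + ⟪x, Matrix.toEuclideanLin H x⟫ := by
      intro t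
      have h0 : (0:ℝ) ≤ c₂ * ‖x + t • y‖ ^ 2 := by positivity
      have h1 := h0.trans (hlower (x + t • y))
      have hexp : ⟪x + t • y, Matrix.toEuclideanLin H (x + t • y)⟫
          = ⟪y, Matrix.toEuclideanLin H y⟫ * (t * t)
            + (2 * ⟪x, Matrix.toEuclideanLin H y⟫) * t
            + ⟪x, Matrix.toEuclideanLin H x⟫ := by
        rw [map_add, _root_.map_smul, inner_add_left, inner_add_right, inner_add_right,
          inner_smul_left, inner_smul_right, inner_smul_left, inner_smul_right]
        have e1 : ⟪y, Matrix.toEuclideanLin H x⟫ = ⟪x, Matrix.toEuclideanLin H y⟫ := by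
          rw [real_inner_comm]; exact hsym x y
        simp only [RCLike.star_def, conj_trivial]
        rw [e1]; ring
      linarith [hexp ▸ h1]
    have hd := discrim_le_zero hpos
    rw [discrim] at hd
    nlinarith [hd]
  -- operator norm bound
  have hTn : ∀ p : EuclideanSpace ℝ (Fin dim),
      ‖Matrix.toEuclideanLin H p‖ ^ 2 ≤ c₁ ^ 2 * ‖p‖ ^ 2 := by
    intro p
    by_cases h0 : Matrix.toEuclideanLin H p = 0
    · rw [h0]; simp; positivity
    · have hn : 0 < ‖Matrix.toEuclideanLin H p‖ := norm_pos_iff.mpr h0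
      have h1 := hCS (Matrix.toEuclideanLin H p) p
      have h2 := hupper (Matrix.toEuclideanLin H p)
      have h3 := hupper p
      have h4 : ⟪Matrix.toEuclideanLin H p, Matrix.toEuclideanLin H p⟫
          = ‖Matrix.toEuclideanLin H p‖ ^ 2 := real_inner_self_eq_norm_sq _
      have h5 : (0:ℝ) ≤ ⟪p, Matrix.toEuclideanLin H p⟫ := by
        have := hlower p; nlinarith [sq_nonneg ‖p‖]
      have h6 : (0:ℝ) ≤ ⟪Matrix.toEuclideanLin H p, Matrix.toEuclideanLin H
          (Matrix.toEuclideanLin H p)⟫ := by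
        have := hlower (Matrix.toEuclideanLin H p); nlinarith [sq_nonneg ‖Matrix.toEuclideanLin H p‖]
      have h7 : ⟪Matrix.toEuclideanLin H p, p⟫ = ⟪p, Matrix.toEuclideanLin H p⟫ :=
        real_inner_comm _ _
      -- hCS (Tp) p : ⟪Tp, Tp⟫² ≤ ⟪Tp, T(Tp)⟫ * ⟪p, Tp⟫ ... careful: hCS x y uses ⟪x, Ty⟫
      nlinarith [mul_pos hn hn, sq_nonneg ‖p‖, mul_nonneg h5 (le_of_lt hc₁)]
  -- variational inequality for the minimizer of Qhat
  have hVI : ∀ q : EuclideanSpace ℝ (Fin dim),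
      0 ≤ ⟪v, q - dstar⟫ + ψ * ⟪dstar, q - dstar⟫
        + g (w + pi + q) - g (w + pi + dstar) := by
    intro q
    set X : ℝ := ⟪v, q - dstar⟫ + ψ * ⟪dstar, q - dstar⟫
        + g (w + pi + q) - g (w + pi + dstar) with hX
    by_contra hneg
    push_neg at hneg
    set C : ℝ := ‖q - dstar‖ ^ 2 with hC
    have hC0 : (0:ℝ) ≤ C := by positivity
    have hden : (0:ℝ) < ψ * C + 1 := by positivity
    set t : ℝ := min 1 ((-X) / (ψ * C + 1)) with ht
    have ht0 : 0 < t := lt_min one_pos (div_pos (by linarith) hden)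
    have ht1 : t ≤ 1 := min_le_left _ _
    have htle : t * (ψ * C + 1) ≤ -X := by
      rw [← le_div_iff₀ hden]; exact min_le_right _ _
    -- key inequality from minimality and convexity
    have key := hmin (dstar + t • (q - dstar))
    rw [hQhat, hQhat] at key
    have hpt : w + pi + (dstar + t • (q - dstar))
        = (1 - t) • (w + pi + dstar) + t • (w + pi + q) := by module
    rw [hpt] at key
    have hconv := hg.2 (Set.mem_univ (w + pi + dstar)) (Set.mem_univ (w + pi + q))
      (by linarith : (0:ℝ) ≤ 1 - t) ht0.le (by ring)
    simp only [smul_eq_mul] at hconv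
    have hns : ‖dstar + t • (q - dstar)‖ ^ 2
        = ‖dstar‖ ^ 2 + 2 * (t * ⟪dstar, q - dstar⟫) + t ^ 2 * ‖q - dstar‖ ^ 2 := by
      rw [norm_add_sq_real, inner_smul_right, norm_smul, mul_pow, Real.norm_eq_abs, sq_abs]
    have hinner : ⟪v, dstar + t • (q - dstar)⟫ = ⟪v, dstar⟫ + t * ⟪v, q - dstar⟫ := by
      rw [inner_add_right, inner_smul_right]
    rw [hns, hinner] at key
    have hE : t * X = t * ⟪v, q - dstar⟫ + ψ * (t * ⟪dstar, q - dstar⟫)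
        + t * g (w + pi + q) - t * g (w + pi + dstar) := by rw [hX]; ring
    have hkey : 0 ≤ t * X + (ψ / 2) * t ^ 2 * C := by
      rw [hE, hC]; linarith [key, hconv]
    have h2 : 0 ≤ X + (ψ / 2) * t * C :=
      le_of_mul_le_mul_left (by linarith [hkey] : t * 0 ≤ t * (X + (ψ / 2) * t * C)) ht0
    linarith [h2, htle, ht0, hneg]
  -- main assembly
  set p1 : EuclideanSpace ℝ (Fin dim) := pi + dstar with hp1
  set u : EuclideanSpace ℝ (Fin dim) := pmin - p1 with hu
  have hpm : pmin = p1 + u := by rw [hu]; abel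
  -- quadratic expansion
  have e1 : ⟪pmin, Matrix.toEuclideanLin H pmin⟫
      = ⟪p1, Matrix.toEuclideanLin H p1⟫ + 2 * ⟪u, Matrix.toEuclideanLin H p1⟫
        + ⟪u, Matrix.toEuclideanLin H u⟫ := by
    rw [hpm, map_add, inner_add_left, inner_add_right, inner_add_right]
    have ea : ⟪p1, Matrix.toEuclideanLin H u⟫ = ⟪u, Matrix.toEuclideanLin H p1⟫ := by
      rw [real_inner_comm]; exact hsym u p1
    rw [ea]; ring
  have e2 : ⟪gradfw, pmin⟫ = ⟪gradfw, p1⟫ + ⟪gradfw, u⟫ := by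
    rw [hpm, inner_add_right]
  -- VI instance at q = pmin - pi
  have e3 : 0 ≤ ⟪v, u⟫ + ψ * ⟪dstar, u⟫ + g (w + pmin) - g (w + p1) := by
    have := hVI (pmin - pi)
    have ha : pmin - pi - dstar = u := by rw [hu, hp1]; abel
    have hb : w + pi + (pmin - pi) = w + pmin := by abel
    have hd : w + pi + dstar = w + p1 := by rw [hp1]; abel
    rw [ha, hb, hd] at this
    exact this
  have e4 : ⟪v, u⟫ = ⟪gradfw, u⟫ + ⟪Matrix.toEuclideanLin H pi, u⟫ := by
    rw [hv, inner_add_left]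
  have e5 : ⟪u, Matrix.toEuclideanLin H p1⟫
      = ⟪Matrix.toEuclideanLin H pi, u⟫ + ⟪u, Matrix.toEuclideanLin H dstar⟫ := by
    rw [hp1, map_add, inner_add_right, real_inner_comm u (Matrix.toEuclideanLin H pi)]
  have e6 := hlower u
  -- define s
  set s : EuclideanSpace ℝ (Fin dim) := Matrix.toEuclideanLin H dstar - ψ • dstar with hs
  have e7 : ⟪u, s⟫ = ⟪u, Matrix.toEuclideanLin H dstar⟫ - ψ * ⟪dstar, u⟫ := by
    rw [hs, inner_sub_right, inner_smul_right, real_inner_comm dstar u]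
  have hQdiff : Q pmin - Q p1 ≥ ⟪u, s⟫ + (c₂ / 2) * ‖u‖ ^ 2 := by
    rw [hQ pmin, hQ p1]
    have hgp : g (w + pmin) - g (w + p1) ≥ -(⟪v, u⟫ + ψ * ⟪dstar, u⟫) := by linarith [e3]
    rw [e1, e2, e5, e7] at *
    linarith [e3, e4, e6]
  -- norm of s
  have e9 : ‖s‖ ^ 2 ≤ (c₁ ^ 2 + ψ ^ 2) * ‖dstar‖ ^ 2 := by
    rw [hs, norm_sub_sq_real, inner_smul_right, norm_smul, mul_pow, Real.norm_eq_abs, sq_abs]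
    have h1 := hTn dstar
    have h2 : ⟪Matrix.toEuclideanLin H dstar, dstar⟫ = ⟪dstar, Matrix.toEuclideanLin H dstar⟫ :=
      real_inner_comm _ _
    have h3 := hlower dstar
    nlinarith [sq_nonneg ‖dstar‖, mul_nonneg hψ.le (mul_nonneg hc₂.le (sq_nonneg ‖dstar‖))]
  -- final chain
  have e8 : -⟪u, s⟫ ≤ ‖u‖ * ‖s‖ := by
    have := abs_real_inner_le_norm u s
    cases' abs_le.mp this with hl hr
    linarith
  have e10 : ‖u‖ * ‖s‖ - (c₂ / 2) * ‖u‖ ^ 2 ≤ ‖s‖ ^ 2 / (2 * c₂) := by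
    rw [le_div_iff₀ (by positivity : (0:ℝ) < 2 * c₂)]
    nlinarith [sq_nonneg (c₂ * ‖u‖ - ‖s‖), hc₂]
  have e11 : ‖s‖ ^ 2 / (2 * c₂) ≤ ((c₁ ^ 2 + ψ ^ 2) / c₂) * ‖dstar‖ ^ 2 := by
    rw [div_le_iff₀ (by positivity : (0:ℝ) < 2 * c₂)]
    have heq : ((c₁ ^ 2 + ψ ^ 2) / c₂) * ‖dstar‖ ^ 2 * (2 * c₂)
        = 2 * ((c₁ ^ 2 + ψ ^ 2) * ‖dstar‖ ^ 2) := by field_simp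
    rw [heq]
    nlinarith [e9, mul_nonneg (by positivity : (0:ℝ) ≤ c₁ ^ 2 + ψ ^ 2) (sq_nonneg ‖dstar‖)]
  have hQp : Q p1 - Qstar ≤ ‖u‖ * ‖s‖ - (c₂ / 2) * ‖u‖ ^ 2 := by
    rw [← hatt]; linarith [hQdiff, e8]
  linarith [hQp, e10, e11]
end

section
/- Under the setting of the SpaRSA inner iteration: g : ℝ^d → ℝ convex, H symmetric with c₂I ⪯ H ⪯ c₁I (0 < c₂ ≤ c₁), Q(p) := ⟨∇f̃(w), p⟩ + ½⟨p, Hp⟩ + g(w + p) − g(w) with minimum value Q*, σ₀ ∈ (0,1), ψ > 0, p⁽ⁱ⁾ ∈ ℝ^d, v := ∇f̃(w) + H p⁽ⁱ⁾, d* a minimizer of Q̂_ψ(d) := ⟨v, d⟩ + (ψ/2)‖d‖² + g(w + p⁽ⁱ⁾ + d) − g(w + p⁽ⁱ⁾), and p⁽ⁱ⁺¹⁾ := p⁽ⁱ⁾ + d*. If the sufficient-decrease condition Q(p⁽ⁱ⁺¹⁾) ≤ Q(p⁽ⁱ⁾) − (ψσ₀/2)‖d*‖² holds, then (1 + c₂σ₀ψ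 / (2(c₁² + ψ²))) · (Q(p⁽ⁱ⁺¹⁾) − Q*) ≤ Q(p⁽ⁱ⁾) − Q*; that is, one SpaRSA iteration contracts the model optimality gap Q-linearly. -/
set_option maxHeartbeats 1000000


open RealInnerProductSpace Matrix

/-- one accepted SpaRSA inner iteration contracts the model
optimality gap Q-linearly: if the sufficient-decrease condition
`Q(p⁽ⁱ⁺¹⁾) ≤ Q(p⁽ⁱ⁾) − (ψσ₀/2)‖d*‖²` holds for the step `p⁽ⁱ⁺¹⁾ = p⁽ⁱ⁾ + d*`,
then `(1 + c₂σ₀ψ/(2(c₁² + ψ²)))(Q(p⁽ⁱ⁺¹⁾) − Q*) ≤ Q(p⁽ⁱ⁾) − Q*`. Here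
`gradfw` denotes the gradient `∇f̃(w)` of the smooth part at `w`. -/
theorem sparsa_one_step_linear_contraction
    (dim : ℕ) (c₁ c₂ : ℝ) (hc₂ : 0 < c₂) (hc : c₂ ≤ c₁)
    (g : EuclideanSpace ℝ (Fin dim) → ℝ) (hg : ConvexOn ℝ Set.univ g)
    (H : Matrix (Fin dim) (Fin dim) ℝ) (hsymm : H.IsSymm)
    (hlower : ∀ p : EuclideanSpace ℝ (Fin dim),
      c₂ * ‖p‖ ^ 2 ≤ ⟪p, Matrix.toEuclideanLin H p⟫)
    (hupper : ∀ p : EuclideanSpace ℝ (Fin dim),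
      ⟪p, Matrix.toEuclideanLin H p⟫ ≤ c₁ * ‖p‖ ^ 2)
    (w gradfw : EuclideanSpace ℝ (Fin dim))
    (Q : EuclideanSpace ℝ (Fin dim) → ℝ)
    (hQ : ∀ p, Q p = ⟪gradfw, p⟫ + (1 / 2) * ⟪p, Matrix.toEuclideanLin H p⟫
      + g (w + p) - g w)
    (Qstar : ℝ) (pmin : EuclideanSpace ℝ (Fin dim))
    (hlb : ∀ p, Qstar ≤ Q p) (hatt : Q pmin = Qstar)
    (σ₀ : ℝ) (hσ₀ : σ₀ ∈ Set.Ioo (0 : ℝ) 1)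
    (pi : EuclideanSpace ℝ (Fin dim)) (ψ : ℝ) (hψ : 0 < ψ)
    (v : EuclideanSpace ℝ (Fin dim)) (hv : v = gradfw + Matrix.toEuclideanLin H pi)
    (Qhat : EuclideanSpace ℝ (Fin dim) → ℝ)
    (hQhat : ∀ q, Qhat q = ⟪v, q⟫ + (ψ / 2) * ‖q‖ ^ 2 + g (w + pi + q) - g (w + pi))
    (dstar : EuclideanSpace ℝ (Fin dim))
    (hmin : ∀ q, Qhat dstar ≤ Qhat q)
    (hdec : Q (pi + dstar) ≤ Q pi - (ψ * σ₀ / 2) * ‖dstar‖ ^ 2) :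
    (1 + c₂ * σ₀ * ψ / (2 * (c₁ ^ 2 + ψ ^ 2))) * (Q (pi + dstar) - Qstar)
      ≤ Q pi - Qstar := by
  obtain ⟨hσ0, hσ1⟩ := hσ₀
  set T : EuclideanSpace ℝ (Fin dim) →ₗ[ℝ] EuclideanSpace ℝ (Fin dim) :=
    Matrix.toEuclideanLin H with hTdef
  have hherm : H.IsHermitian := by
    rw [Matrix.IsHermitian, Matrix.conjTranspose_eq_transpose_of_trivial]; exact hsymm
  have hTsym : T.IsSymmetric := Matrix.isHermitian_iff_isSymmetric.mp hherm
  -- operator norm bound ‖T x‖ ≤ c₁ ‖x‖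
  have hTnorm : ∀ x : EuclideanSpace ℝ (Fin dim), ‖T x‖ ≤ c₁ * ‖x‖ := by
    intro x
    rcases eq_or_ne (T x) 0 with h0 | h0
    · rw [h0, norm_zero]
      exact mul_nonneg (by linarith) (norm_nonneg x)
    · have hself : ⟪T x, T x⟫ = ⟪x, T (T x)⟫ := hTsym x (T x)
      have hdisc : ∀ t : ℝ, 0 ≤ ⟪T x, T (T x)⟫ * (t * t) + (2 * ⟪x, T (T x)⟫) * t + ⟪x, T x⟫ := by
        intro t
        have h := le_trans (mul_nonneg hc₂.le (by positivity : (0:ℝ) ≤ ‖x + t • T x‖ ^ 2))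
          (hlower (x + t • T x))
        have hexp : ⟪x + t • (T x), T (x + t • (T x))⟫
            = ⟪T x, T (T x)⟫ * (t * t) + (2 * ⟪x, T (T x)⟫) * t + ⟪x, T x⟫ := by
          rw [map_add, LinearMap.map_smul]
          rw [inner_add_left, inner_add_right, inner_add_right,
            real_inner_smul_left, real_inner_smul_left, real_inner_smul_right,
            real_inner_smul_right, ← hself]
          ring
        calc (0:ℝ) ≤ ⟪x + t • (T x), T (x + t • (T x))⟫ := h
          _ = _ := hexp
      have hd := discrim_le_zero hdisc
      rw [discrim] at hd
      have h1 : ⟪x, T (T x)⟫ = ‖T x‖ ^ 2 := by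
        rw [← hself, real_inner_self_eq_norm_sq]
      have h2 : ⟪T x, T (T x)⟫ ≤ c₁ * ‖T x‖ ^ 2 := hupper (T x)
      have h3 : ⟪x, T x⟫ ≤ c₁ * ‖x‖ ^ 2 := hupper x
      have h4 : 0 ≤ ⟪x, T x⟫ := le_trans (by positivity) (hlower x)
      have h5 : 0 ≤ ⟪T x, T (T x)⟫ := le_trans (by positivity) (hlower (T x))
      have hxpos : 0 < ‖T x‖ := norm_pos_iff.mpr h0
      have hb : 0 ≤ c₁ * ‖x‖ := mul_nonneg (by linarith) (norm_nonneg x)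
      have hm : ⟪T x, T (T x)⟫ * ⟪x, T x⟫ ≤ c₁ * ‖T x‖ ^ 2 * (c₁ * ‖x‖ ^ 2) :=
        mul_le_mul h2 h3 h4 (mul_nonneg (by linarith) (sq_nonneg _))
      by_contra hcc
      push_neg at hcc
      have hs : c₁ * ‖x‖ * (c₁ * ‖x‖) < ‖T x‖ * ‖T x‖ := mul_self_lt_mul_self hb hcc
      nlinarith [hd, h1, hm, hs, mul_pos hxpos hxpos]
  -- optimality of dstar
  have hkey : ∀ q : EuclideanSpace ℝ (Fin dim),
      0 ≤ ⟪v, q - dstar⟫ + ψ * ⟪dstar, q - dstar⟫ + g (w + pi + q) - g (w + pi + dstar) := by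
    intro q
    set u : EuclideanSpace ℝ (Fin dim) := q - dstar with hu
    by_contra hcon
    push_neg at hcon
    set A : ℝ := ⟪v, u⟫ + ψ * ⟪dstar, u⟫ + g (w + pi + q) - g (w + pi + dstar) with hA
    set B : ℝ := ψ / 2 * ‖u‖ ^ 2 with hB
    have hBnn : 0 ≤ B := by positivity
    set t : ℝ := min 1 ((-A) / (2 * (B + 1))) with ht
    have htpos : 0 < t := lt_min one_pos (div_pos (by linarith) (by positivity))
    have ht1 : t ≤ 1 := min_le_left _ _
    have htle : t * (2 * (B + 1)) ≤ -A := by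
      have := min_le_right (1:ℝ) ((-A) / (2 * (B + 1)))
      calc t * (2 * (B + 1)) ≤ (-A) / (2 * (B + 1)) * (2 * (B + 1)) := by
            apply mul_le_mul_of_nonneg_right this (by positivity)
        _ = -A := by field_simp
    -- use minimality at dstar + t • u
    have hpt : (1 - t) • (w + pi + dstar) + t • (w + pi + q) = w + pi + (dstar + t • u) := by
      rw [hu]; module
    have hconv : g (w + pi + (dstar + t • u))
        ≤ (1 - t) * g (w + pi + dstar) + t * g (w + pi + q) := by
      have := hg.2 (Set.mem_univ (w + pi + dstar)) (Set.mem_univ (w + pi + q))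
        (by linarith : (0:ℝ) ≤ 1 - t) htpos.le (by ring)
      rw [hpt] at this
      simpa using this
    have h1 := hmin (dstar + t • u)
    rw [hQhat, hQhat] at h1
    have hnorm : ‖dstar + t • u‖ ^ 2 = ‖dstar‖ ^ 2 + 2 * (t * ⟪dstar, u⟫) + t ^ 2 * ‖u‖ ^ 2 := by
      rw [norm_add_sq_real, real_inner_smul_right, norm_smul]
      simp [mul_pow, sq_abs]
    have hinner : ⟪v, dstar + t • u⟫ = ⟪v, dstar⟫ + t * ⟪v, u⟫ := by
      rw [inner_add_right, real_inner_smul_right]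
    rw [hnorm, hinner] at h1
    have h2 : 0 ≤ t * A + t ^ 2 * B := by
      rw [hA, hB]; nlinarith [hconv, h1]
    have h3 : 0 ≤ A + t * B := by
      have : t * 0 ≤ t * (A + t * B) := by rw [mul_zero]; nlinarith [h2]
      exact le_of_mul_le_mul_left this htpos
    linarith [h3, htle, hcon, htpos]
  -- strong convexity / gap bound
  obtain ⟨pp, hpp⟩ : ∃ pp : EuclideanSpace ℝ (Fin dim), pp = pi + dstar := ⟨_, rfl⟩
  obtain ⟨z, hzdef⟩ : ∃ z : EuclideanSpace ℝ (Fin dim), z = pmin - pp := ⟨_, rfl⟩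
  have hzz : pmin = pp + z := by rw [hzdef]; abel
  have hTsym' : ∀ x y : EuclideanSpace ℝ (Fin dim), ⟪x, T y⟫ = ⟪y, T x⟫ := by
    intro x y; rw [← hTsym x y, real_inner_comm]
  have e1 : Qstar - Q pp
      = ⟪gradfw, z⟫ + ⟪z, T pp⟫ + (1 / 2) * ⟪z, T z⟫ + g (w + pmin) - g (w + pp) := by
    rw [← hatt, hQ, hQ, hzz]
    have hexp : ⟪pp + z, T (pp + z)⟫ = ⟪pp, T pp⟫ + 2 * ⟪z, T pp⟫ + ⟪z, T z⟫ := by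
      rw [map_add, inner_add_left, inner_add_right, inner_add_right, hTsym' pp z]
      ring
    rw [inner_add_right, hexp]
    ring_nf
  have hkey' := hkey (pmin - pi)
  have hq1 : w + pi + (pmin - pi) = w + pmin := by abel
  have hq2 : (pmin - pi) - dstar = z := by rw [hzdef, hpp]; abel
  rw [hq1, hq2] at hkey'
  have hvz : ⟪v, z⟫ = ⟪gradfw, z⟫ + ⟪z, T pi⟫ := by
    rw [hv, inner_add_left, real_inner_comm (Matrix.toEuclideanLin H pi) z]
  have hTpz : ⟪z, T pp⟫ = ⟪z, T pi⟫ + ⟪z, T dstar⟫ := by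
    rw [hpp, map_add, inner_add_right]
  have hzlow := hlower z
  have hgap1 : Q pp - Qstar ≤ ψ * ⟪dstar, z⟫ - ⟪z, T dstar⟫ - c₂ / 2 * ‖z‖ ^ 2 := by
    have hgpp : w + pi + dstar = w + pp := by rw [hpp]; abel
    rw [hgpp] at hkey'
    have hzq : (1:ℝ) / 2 * ⟪z, T z⟫ ≥ c₂ / 2 * ‖z‖ ^ 2 := by linarith [hzlow]
    linarith [e1, hkey', hvz, hTpz, hzq]
  have hCSeq : ⟪ψ • dstar - T dstar, z⟫ = ψ * ⟪dstar, z⟫ - ⟪z, T dstar⟫ := by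
    rw [inner_sub_left, real_inner_smul_left, real_inner_comm (T dstar) z]
  have hCS : ψ * ⟪dstar, z⟫ - ⟪z, T dstar⟫ ≤ ‖ψ • dstar - T dstar‖ * ‖z‖ :=
    hCSeq ▸ real_inner_le_norm _ _
  have hgap3 : 2 * c₂ * (Q pp - Qstar) ≤ ‖ψ • dstar - T dstar‖ ^ 2 := by
    nlinarith [hgap1, hCS, sq_nonneg (‖ψ • dstar - T dstar‖ - c₂ * ‖z‖), norm_nonneg z, hc₂]
  have hnrm : ‖ψ • dstar - T dstar‖ ^ 2 ≤ (c₁ ^ 2 + ψ ^ 2) * ‖dstar‖ ^ 2 := by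
    have hns : ‖ψ • dstar - T dstar‖ ^ 2
        = ‖ψ • dstar‖ ^ 2 - 2 * ⟪ψ • dstar, T dstar⟫ + ‖T dstar‖ ^ 2 := norm_sub_sq_real _ _
    have h1 : ⟪ψ • dstar, T dstar⟫ = ψ * ⟪dstar, T dstar⟫ := real_inner_smul_left _ _ _
    have h2 : 0 ≤ ⟪dstar, T dstar⟫ := le_trans (by positivity) (hlower dstar)
    have h3 : ‖T dstar‖ ≤ c₁ * ‖dstar‖ := hTnorm dstar
    have h4 : ‖ψ • dstar‖ ^ 2 = ψ ^ 2 * ‖dstar‖ ^ 2 := by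
      rw [norm_smul]; simp [mul_pow, sq_abs]
    nlinarith [norm_nonneg (T dstar), norm_nonneg dstar, mul_pos hψ hψ]
  have hgapnn : 0 ≤ Q pp - Qstar := by linarith [hlb pp]
  have hD : (0:ℝ) < c₁ ^ 2 + ψ ^ 2 := by positivity
  have hcomb : 2 * c₂ * (Q pp - Qstar) ≤ (c₁ ^ 2 + ψ ^ 2) * ‖dstar‖ ^ 2 :=
    le_trans hgap3 hnrm
  have key : c₂ * σ₀ * ψ / (2 * (c₁ ^ 2 + ψ ^ 2)) * (Q pp - Qstar)
      ≤ ψ * σ₀ / 2 * ‖dstar‖ ^ 2 := by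
    rw [div_mul_eq_mul_div, div_le_iff₀ (by positivity)]
    nlinarith [mul_le_mul_of_nonneg_left hcomb (by positivity : (0:ℝ) ≤ σ₀ * ψ),
      mul_nonneg (mul_nonneg hσ0.le hψ.le) (mul_nonneg hc₂.le hgapnn)]
  have hdec' : Q pp ≤ Q pi - ψ * σ₀ / 2 * ‖dstar‖ ^ 2 := by
    rw [hpp]; linarith [hdec]
  have : (1 + c₂ * σ₀ * ψ / (2 * (c₁ ^ 2 + ψ ^ 2))) * (Q pp - Qstar) ≤ Q pi - Qstar := by
    nlinarith [key, hdec', hgapnn]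
  rw [hpp] at this
  exact this
end

section
/- Under the SpaRSA setting (g : ℝ^d → ℝ convex, H symmetric with c₂I ⪯ H ⪯ c₁I for 0 < c₂ ≤ c₁, Q(p) := ⟨∇f̃(w), p⟩ + ½⟨p, Hp⟩ + g(w + p) − g(w) with minimum value Q*, σ₀ ∈ (0,1)), suppose a sequence p⁽⁰⁾ = 0, p⁽¹⁾, …, p⁽ˢ⁾ is generated so that for each i < S, p⁽ⁱ⁺¹⁾ = p⁽ⁱ⁾ + d⁽ⁱ⁾ where d⁽ⁱ⁾ minimizes the prox subproblem Q̂_{ψᵢ}(d) := ⟨∇f̃(w) + Hp⁽ⁱ⁾, d⟩ + (ψᵢ/2)‖d‖² + g(w + p⁽ⁱ⁾ + d) − g(w + p⁽ⁱ⁾) with parameter ψᵢ ∈ [ψ_lo, ψ_hi] (0 < ψ_lo ≤ ψ_hi), and the sufficient-decrease condition Q(p⁽ⁱ⁺¹⁾) ≤ Q(p⁽ⁱ⁾) − (ψᵢσ₀/2)‖d⁽ⁱ⁾‖² holds. Then, with η := (1 + c₂σ₀ψ_lo / (2(c₁² + ψ_hi²)))⁻¹ ∈ [0,1), the final iterate satisfies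 Q(p⁽ˢ⁾) − Q* ≤ η^S (Q(0) − Q*) = −η^S Q*. -/
set_option maxHeartbeats 1000000


open RealInnerProductSpace Matrix

private lemma sparsa_aux_neg_le {B Y : ℝ} (h : B ^ 2 ≤ Y ^ 2) (hY : 0 ≤ Y) : -Y ≤ B := by
  nlinarith [sq_nonneg (B + Y)]

private lemma sparsa_aux_div {t E : ℝ} (ht : 0 < t) (h : 0 ≤ t * E) : 0 ≤ E :=
  le_of_not_gt fun hE => (not_le.2 (mul_neg_of_pos_of_neg ht hE)) h

private lemma sparsa_aux_combo {K M : ℝ} (hK : 0 < K) :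
    K * (1 - (K - M) / (2 * K)) = (K + M) / 2 := by
  field_simp
  ring

private lemma sparsa_aux_young {r s a c₁ c₂ ψhi : ℝ} (hc₂ : 0 < c₂) (ha : 0 < a)
    (hah : a ≤ ψhi) (hc₁ : 0 < c₁) (hr : 0 ≤ r) (hs : 0 ≤ s) :
    (a * (r * s) + c₁ * s * r - c₂ / 2 * s ^ 2) * c₂ ≤ (c₁ ^ 2 + ψhi ^ 2) * r ^ 2 := by
  nlinarith [sq_nonneg (c₂ * s - (a + c₁) * r), sq_nonneg (a - c₁), sq_nonneg r,
    mul_nonneg (mul_nonneg (sub_nonneg.2 hah) (by linarith : (0:ℝ) ≤ ψhi + a)) (sq_nonneg r)]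

/-- running `S` accepted SpaRSA iterations from `p⁽⁰⁾ = 0`, with
prox parameters `ψᵢ ∈ [ψ_lo, ψ_hi]`, yields an `η^S`-inexact minimizer of the
quadratic model: `Q(p⁽ˢ⁾) − Q* ≤ η^S (Q(0) − Q*)`, where
`η = (1 + c₂σ₀ψ_lo/(2(c₁² + ψ_hi²)))⁻¹ ∈ [0, 1)`. Here `gradfw` denotes the
gradient `∇f̃(w)` of the smooth part at `w`. -/
theorem sparsa_S_iterations_inexactness
    (dim : ℕ) (c₁ c₂ : ℝ) (hc₂ : 0 < c₂) (hc : c₂ ≤ c₁)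
    (g : EuclideanSpace ℝ (Fin dim) → ℝ) (hg : ConvexOn ℝ Set.univ g)
    (H : Matrix (Fin dim) (Fin dim) ℝ) (hsymm : H.IsSymm)
    (hlower : ∀ p : EuclideanSpace ℝ (Fin dim),
      c₂ * ‖p‖ ^ 2 ≤ ⟪p, Matrix.toEuclideanLin H p⟫)
    (hupper : ∀ p : EuclideanSpace ℝ (Fin dim),
      ⟪p, Matrix.toEuclideanLin H p⟫ ≤ c₁ * ‖p‖ ^ 2)
    (w gradfw : EuclideanSpace ℝ (Fin dim))
    (Q : EuclideanSpace ℝ (Fin dim) → ℝ)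
    (hQ : ∀ p, Q p = ⟪gradfw, p⟫ + (1 / 2) * ⟪p, Matrix.toEuclideanLin H p⟫
      + g (w + p) - g w)
    (Qstar : ℝ) (pmin : EuclideanSpace ℝ (Fin dim))
    (hlb : ∀ p, Qstar ≤ Q p) (hatt : Q pmin = Qstar)
    (σ₀ : ℝ) (hσ₀ : σ₀ ∈ Set.Ioo (0 : ℝ) 1)
    (ψlo ψhi : ℝ) (hψlo : 0 < ψlo) (hψ : ψlo ≤ ψhi)
    (S : ℕ)
    (pseq : ℕ → EuclideanSpace ℝ (Fin dim)) (hp0 : pseq 0 = 0)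
    (ψ : ℕ → ℝ) (dstep : ℕ → EuclideanSpace ℝ (Fin dim))
    (hψrange : ∀ i < S, ψ i ∈ Set.Icc ψlo ψhi)
    (hstep : ∀ i < S, pseq (i + 1) = pseq i + dstep i)
    (hmin : ∀ i < S, ∀ q : EuclideanSpace ℝ (Fin dim),
      ⟪gradfw + Matrix.toEuclideanLin H (pseq i), dstep i⟫
        + (ψ i / 2) * ‖dstep i‖ ^ 2 + g (w + pseq i + dstep i) - g (w + pseq i)
      ≤ ⟪gradfw + Matrix.toEuclideanLin H (pseq i), q⟫
        + (ψ i / 2) * ‖q‖ ^ 2 + g (w + pseq i + q) - g (w + pseq i))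
    (hdec : ∀ i < S,
      Q (pseq (i + 1)) ≤ Q (pseq i) - (ψ i * σ₀ / 2) * ‖dstep i‖ ^ 2) :
    (1 + c₂ * σ₀ * ψlo / (2 * (c₁ ^ 2 + ψhi ^ 2)))⁻¹ ∈ Set.Ico (0 : ℝ) 1 ∧
    Q (pseq S) - Qstar
      ≤ (1 + c₂ * σ₀ * ψlo / (2 * (c₁ ^ 2 + ψhi ^ 2)))⁻¹ ^ S * (Q 0 - Qstar) := by
  obtain ⟨hσ0, hσ1⟩ := hσ₀
  have hψhi : 0 < ψhi := lt_of_lt_of_le hψlo hψ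
  have hc₁ : 0 < c₁ := lt_of_lt_of_le hc₂ hc
  set T : EuclideanSpace ℝ (Fin dim) →ₗ[ℝ] EuclideanSpace ℝ (Fin dim) :=
    Matrix.toEuclideanLin H with hTdef
  have hherm : H.IsHermitian := by
    rw [Matrix.IsHermitian, Matrix.conjTranspose_eq_transpose_of_trivial]
    exact hsymm
  have hsymT : ∀ x y : EuclideanSpace ℝ (Fin dim), ⟪T x, y⟫ = ⟪x, T y⟫ :=
    Matrix.isHermitian_iff_isSymmetric.1 hherm
  clear_value T
  set β : ℝ := c₂ * σ₀ * ψlo / (2 * (c₁ ^ 2 + ψhi ^ 2)) with hβdef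
  have hden : (0:ℝ) < c₁ ^ 2 + ψhi ^ 2 := by positivity
  clear_value β
  have hβpos : 0 < β := by rw [hβdef]; positivity
  have h1β : (0:ℝ) < 1 + β := by linarith
  have hηmem : (1 + β)⁻¹ ∈ Set.Ico (0:ℝ) 1 := by
    constructor
    · exact inv_nonneg.2 h1β.le
    · exact inv_lt_one_of_one_lt₀ (by linarith)
  -- per-step contraction
  have key : ∀ i, i < S → Q (pseq (i+1)) - Qstar ≤ (1+β)⁻¹ * (Q (pseq i) - Qstar) := by
    intro i hi
    obtain ⟨hψl, hψh⟩ := hψrange i hi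
    have hψipos : 0 < ψ i := lt_of_lt_of_le hψlo hψl
    set qs : EuclideanSpace ℝ (Fin dim) := pmin - pseq i with hqs
    set x : EuclideanSpace ℝ (Fin dim) := qs - dstep i with hx
    clear_value qs x
    have hqd : qs = dstep i + x := by rw [hx]; abel
    -- split of Q along translation
    have hsplit : ∀ r, Q (pseq i + r) = Q (pseq i) + ⟪gradfw + T (pseq i), r⟫
        + 1 / 2 * ⟪r, T r⟫ + g (w + pseq i + r) - g (w + pseq i) := by
      intro r
      have ea : ⟪pseq i + r, T (pseq i + r)⟫
          = ⟪pseq i, T (pseq i)⟫ + 2 * ⟪T (pseq i), r⟫ + ⟪r, T r⟫ := by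
        rw [map_add, inner_add_left, inner_add_right, inner_add_right,
          ← hsymT (pseq i) r, real_inner_comm r (T (pseq i))]
        ring
      have eg : ⟪gradfw, pseq i + r⟫ = ⟪gradfw, pseq i⟫ + ⟪gradfw, r⟫ := by
        rw [inner_add_right]
      have eG : ⟪gradfw + T (pseq i), r⟫ = ⟪gradfw, r⟫ + ⟪T (pseq i), r⟫ := by
        rw [inner_add_left]
      rw [hQ, hQ, ← add_assoc w (pseq i) r]
      linarith [ea, eg, eG]
    -- useful inner-product expansions
    have e3 : ‖qs‖ ^ 2 = ‖dstep i‖ ^ 2 + 2 * ⟪dstep i, x⟫ + ‖x‖ ^ 2 := by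
      rw [hqd]
      simp only [← real_inner_self_eq_norm_sq]
      rw [real_inner_add_add_self]
    have e4 : ⟪gradfw + T (pseq i), qs⟫
        = ⟪gradfw + T (pseq i), dstep i⟫ + ⟪gradfw + T (pseq i), x⟫ := by
      rw [hqd, inner_add_right]
    set M : ℝ := (⟪gradfw + T (pseq i), qs⟫ + ψ i / 2 * ‖qs‖ ^ 2 + g (w + pseq i + qs))
        - (⟪gradfw + T (pseq i), dstep i⟫ + ψ i / 2 * ‖dstep i‖ ^ 2
          + g (w + pseq i + dstep i)) with hMdef
    clear_value M
    -- strengthened minimality of the prox step, scaled form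
    have hm0 := hmin i hi
    have hts : ∀ t : ℝ, 0 < t → t ≤ 1 → ψ i / 2 * ‖x‖ ^ 2 * (1 - t) ≤ M := by
      intro t ht0 ht1
      have hconv : g (w + pseq i + (dstep i + t • x))
          ≤ (1 - t) * g (w + pseq i + dstep i) + t * g (w + pseq i + qs) := by
        have h := hg.2 (Set.mem_univ (w + pseq i + dstep i)) (Set.mem_univ (w + pseq i + qs))
          (by linarith : (0:ℝ) ≤ 1 - t) ht0.le (by ring)
        have hpt : (1 - t) • (w + pseq i + dstep i) + t • (w + pseq i + qs)
            = w + pseq i + (dstep i + t • x) := by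
          rw [hx]; module
        rwa [hpt] at h
      have hm := hm0 (dstep i + t • x)
      have e1 : ⟪gradfw + T (pseq i), dstep i + t • x⟫
          = ⟪gradfw + T (pseq i), dstep i⟫ + t * ⟪gradfw + T (pseq i), x⟫ := by
        rw [inner_add_right, real_inner_smul_right]
      have e2 : ‖dstep i + t • x‖ ^ 2
          = ‖dstep i‖ ^ 2 + 2 * t * ⟪dstep i, x⟫ + t ^ 2 * ‖x‖ ^ 2 := by
        simp only [← real_inner_self_eq_norm_sq]
        rw [real_inner_add_add_self, real_inner_smul_right, real_inner_smul_left,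
          real_inner_smul_right]
        ring
      have e2ψ : ψ i / 2 * ‖dstep i + t • x‖ ^ 2 = ψ i / 2 * ‖dstep i‖ ^ 2
          + ψ i * t * ⟪dstep i, x⟫ + ψ i / 2 * t ^ 2 * ‖x‖ ^ 2 := by rw [e2]; ring
      have h5 : 0 ≤ t * (⟪gradfw + T (pseq i), x⟫ + ψ i * ⟪dstep i, x⟫
          + ψ i / 2 * t * ‖x‖ ^ 2 + g (w + pseq i + qs) - g (w + pseq i + dstep i)) := by
        linarith only [hm, hconv, e1, e2ψ]
      have h6 : 0 ≤ ⟪gradfw + T (pseq i), x⟫ + ψ i * ⟪dstep i, x⟫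
          + ψ i / 2 * t * ‖x‖ ^ 2 + g (w + pseq i + qs) - g (w + pseq i + dstep i) :=
        sparsa_aux_div ht0 h5
      have e3ψ : ψ i / 2 * ‖qs‖ ^ 2 = ψ i / 2 * ‖dstep i‖ ^ 2
          + ψ i * ⟪dstep i, x⟫ + ψ i / 2 * ‖x‖ ^ 2 := by rw [e3]; ring
      linarith only [h6, e3ψ, e4, hMdef]
    -- pass to the limit t → 0
    have hKM : ψ i / 2 * ‖x‖ ^ 2 ≤ M := by
      have hM0 : 0 ≤ M := by have h := hts 1 one_pos le_rfl; linarith only [h]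
      by_contra hcon
      push_neg at hcon
      have hKpos : 0 < ψ i / 2 * ‖x‖ ^ 2 := hM0.trans_lt hcon
      have ht0 : 0 < (ψ i / 2 * ‖x‖ ^ 2 - M) / (2 * (ψ i / 2 * ‖x‖ ^ 2)) :=
        div_pos (by linarith) (by linarith)
      have ht1 : (ψ i / 2 * ‖x‖ ^ 2 - M) / (2 * (ψ i / 2 * ‖x‖ ^ 2)) ≤ 1 := by
        rw [div_le_one (by linarith)]
        linarith
      have h7 := hts _ ht0 ht1
      have h8 := sparsa_aux_combo (M := M) hKpos
      rw [h8] at h7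
      linarith only [h7, hcon]
    -- main per-step bound
    have hQd := hsplit (dstep i)
    have hQq := hsplit qs
    have hpq : pseq i + qs = pmin := by rw [hqs]; abel
    rw [hpq, hatt] at hQq
    have E1 : ⟪qs, T qs⟫ = ⟪dstep i, T (dstep i)⟫ + 2 * ⟪x, T (dstep i)⟫ + ⟪x, T x⟫ := by
      rw [hqd, map_add, inner_add_left, inner_add_right, inner_add_right,
        ← hsymT (dstep i) x, real_inner_comm (T (dstep i)) x]
      ring
    have hD : Q (pseq i + dstep i) - Qstar
        ≤ ψ i * ⟪dstep i, x⟫ - ⟪x, T (dstep i)⟫ - 1 / 2 * ⟪x, T x⟫ := by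
      have e3ψ : ψ i / 2 * ‖qs‖ ^ 2 = ψ i / 2 * ‖dstep i‖ ^ 2
          + ψ i * ⟪dstep i, x⟫ + ψ i / 2 * ‖x‖ ^ 2 := by rw [e3]; ring
      linarith only [hQd, hQq, hKM, E1, e3ψ, e4, hMdef]
    -- Cauchy–Schwarz with respect to the quadratic form of H
    have hquad : ∀ t : ℝ, 0 ≤ ⟪dstep i, T (dstep i)⟫ * (t * t)
        + (2 * ⟪x, T (dstep i)⟫) * t + ⟪x, T x⟫ := by
      intro t
      have h0 := hlower (t • dstep i + x)
      have hnn : (0:ℝ) ≤ c₂ * ‖t • dstep i + x‖ ^ 2 := by positivity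
      have hexp : ⟪t • dstep i + x, T (t • dstep i + x)⟫
          = ⟪dstep i, T (dstep i)⟫ * (t * t) + (2 * ⟪x, T (dstep i)⟫) * t + ⟪x, T x⟫ := by
        rw [map_add, _root_.map_smul, inner_add_left, inner_add_right, inner_add_right,
          real_inner_smul_left, real_inner_smul_left, real_inner_smul_right,
          real_inner_smul_right, ← hsymT (dstep i) x, real_inner_comm (T (dstep i)) x]
        ring
      rw [hexp] at h0
      linarith only [hnn.trans h0]
    have hdisc := discrim_le_zero hquad
    rw [discrim] at hdisc
    have hdTd : ⟪dstep i, T (dstep i)⟫ ≤ c₁ * ‖dstep i‖ ^ 2 := hupper (dstep i)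
    have hxTx : ⟪x, T x⟫ ≤ c₁ * ‖x‖ ^ 2 := hupper x
    have hdTd0 : 0 ≤ ⟪dstep i, T (dstep i)⟫ := le_trans (by positivity) (hlower (dstep i))
    have hxTx0 : 0 ≤ ⟪x, T x⟫ := le_trans (by positivity) (hlower x)
    have hAC : ⟪dstep i, T (dstep i)⟫ * ⟪x, T x⟫ ≤ (c₁ * ‖dstep i‖ ^ 2) * (c₁ * ‖x‖ ^ 2) :=
      mul_le_mul hdTd hxTx hxTx0 (by positivity)
    have hsq : ⟪x, T (dstep i)⟫ ^ 2 ≤ (c₁ * ‖x‖ * ‖dstep i‖) ^ 2 := by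
      linarith only [hdisc, hAC]
    have hcs : -(c₁ * ‖x‖ * ‖dstep i‖) ≤ ⟪x, T (dstep i)⟫ :=
      sparsa_aux_neg_le hsq
        (mul_nonneg (mul_nonneg hc₁.le (norm_nonneg x)) (norm_nonneg (dstep i)))
    have hTx2 : c₂ * ‖x‖ ^ 2 ≤ ⟪x, T x⟫ := hlower x
    have hip : ⟪dstep i, x⟫ ≤ ‖dstep i‖ * ‖x‖ := real_inner_le_norm (dstep i) x
    have h1 : Q (pseq i + dstep i) - Qstar
        ≤ ψ i * (‖dstep i‖ * ‖x‖) + c₁ * ‖x‖ * ‖dstep i‖ - c₂ / 2 * ‖x‖ ^ 2 := by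
      have h1a : ψ i * ⟪dstep i, x⟫ ≤ ψ i * (‖dstep i‖ * ‖x‖) :=
        mul_le_mul_of_nonneg_left hip hψipos.le
      linarith only [hD, hcs, hTx2, h1a]
    have h2 : Q (pseq i + dstep i) - Qstar ≤ (c₁ ^ 2 + ψhi ^ 2) / c₂ * ‖dstep i‖ ^ 2 := by
      have key2 : ψ i * (‖dstep i‖ * ‖x‖) + c₁ * ‖x‖ * ‖dstep i‖ - c₂ / 2 * ‖x‖ ^ 2
          ≤ (c₁ ^ 2 + ψhi ^ 2) / c₂ * ‖dstep i‖ ^ 2 := by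
        rw [div_mul_eq_mul_div (c₁ ^ 2 + ψhi ^ 2) c₂ (‖dstep i‖ ^ 2), le_div_iff₀ hc₂]
        exact sparsa_aux_young hc₂ hψipos hψh hc₁ (norm_nonneg (dstep i)) (norm_nonneg x)
      linarith only [h1, key2]
    -- combine with sufficient decrease
    have hstep' := hstep i hi
    have hdec' := hdec i hi
    rw [hstep'] at hdec' ⊢
    have hβD : β * (Q (pseq i + dstep i) - Qstar) ≤ ψ i * σ₀ / 2 * ‖dstep i‖ ^ 2 := by
      have e : β * ((c₁ ^ 2 + ψhi ^ 2) / c₂ * ‖dstep i‖ ^ 2)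
          = σ₀ * ψlo / 2 * ‖dstep i‖ ^ 2 := by
        rw [hβdef]
        field_simp
      have h9 := mul_le_mul_of_nonneg_left h2 hβpos.le
      rw [e] at h9
      have h10 : 0 ≤ (ψ i - ψlo) * σ₀ * ‖dstep i‖ ^ 2 :=
        mul_nonneg (mul_nonneg (sub_nonneg.2 hψl) hσ0.le) (sq_nonneg _)
      linarith only [h9, h10]
    rw [inv_mul_eq_div, le_div_iff₀ h1β]
    nlinarith [hβD, hdec']
  -- iterate the contraction
  have main : ∀ n, n ≤ S → Q (pseq n) - Qstar ≤ (1+β)⁻¹ ^ n * (Q (pseq 0) - Qstar) := by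
    intro n
    induction n with
    | zero => intro _; simp
    | succ n ih =>
      intro hn
      have hnS : n < S := hn
      have hk := key n hnS
      have hih := ih (le_of_lt hnS)
      calc Q (pseq (n+1)) - Qstar ≤ (1+β)⁻¹ * (Q (pseq n) - Qstar) := hk
        _ ≤ (1+β)⁻¹ * ((1+β)⁻¹ ^ n * (Q (pseq 0) - Qstar)) :=
            mul_le_mul_of_nonneg_left hih (inv_nonneg.2 h1β.le)
        _ = (1+β)⁻¹ ^ (n+1) * (Q (pseq 0) - Qstar) := by rw [pow_succ]; ring
  refine ⟨hηmem, ?_⟩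
  have hfin := main S le_rfl
  rw [hp0] at hfin
  exact hfin
end

section
/- Let g : ℝ^d → ℝ be convex, let H be a symmetric d×d matrix with ⟨p, Hp⟩ ≥ c₂‖p‖² for all p (c₂ > 0), fix w ∈ ℝ^d, and define Q(p) := ⟨∇f̃(w), p⟩ + ½⟨p, Hp⟩ + g(w + p) − g(w), with minimum value Q* (attained). Let η ∈ [0,1) and S ≥ 1, and suppose p ∈ ℝ^d satisfies the inexactness condition Q(p) − Q* ≤ η^S (Q(0) − Q*) = −η^S Q*. Then the predicted decrease Δ := ⟨∇f̃(w), p⟩ + g(w + p) − g(w) satisfies Δ ≤ −c₂‖p‖² / (1 + η^{S/2}). -/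
set_option maxHeartbeats 1000000


open RealInnerProductSpace Matrix

/-- an `η^S`-inexact solution `p` of the quadratic model
`Q(p) = ⟨∇f̃(w), p⟩ + ½⟨p, Hp⟩ + g(w + p) − g(w)` (with `H ⪰ c₂I`) yields a
predicted decrease `Δ = ⟨∇f̃(w), p⟩ + g(w + p) − g(w)` satisfying
`Δ ≤ −c₂‖p‖²/(1 + η^{S/2})`. Here `gradfw` denotes the gradient `∇f̃(w)` of the
smooth part at `w`, and `η^{S/2}` is a real power. -/
theorem inexact_model_solution_predicted_decrease
    (dim : ℕ) (c₂ : ℝ) (hc₂ : 0 < c₂)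
    (g : EuclideanSpace ℝ (Fin dim) → ℝ) (hg : ConvexOn ℝ Set.univ g)
    (H : Matrix (Fin dim) (Fin dim) ℝ) (hsymm : H.IsSymm)
    (hlower : ∀ p : EuclideanSpace ℝ (Fin dim),
      c₂ * ‖p‖ ^ 2 ≤ ⟪p, Matrix.toEuclideanLin H p⟫)
    (w gradfw : EuclideanSpace ℝ (Fin dim))
    (Q : EuclideanSpace ℝ (Fin dim) → ℝ)
    (hQ : ∀ p, Q p = ⟪gradfw, p⟫ + (1 / 2) * ⟪p, Matrix.toEuclideanLin H p⟫
      + g (w + p) - g w)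
    (Qstar : ℝ) (pmin : EuclideanSpace ℝ (Fin dim))
    (hlb : ∀ p, Qstar ≤ Q p) (hatt : Q pmin = Qstar)
    (η : ℝ) (hη : η ∈ Set.Ico (0 : ℝ) 1) (S : ℕ) (hS : 1 ≤ S)
    (p : EuclideanSpace ℝ (Fin dim))
    (hinexact : Q p - Qstar ≤ η ^ S * (Q 0 - Qstar))
    (Δ : ℝ) (hΔ : Δ = ⟪gradfw, p⟫ + g (w + p) - g w) :
    Δ ≤ -(c₂ * ‖p‖ ^ 2) / (1 + η ^ ((S : ℝ) / 2)) := by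
  obtain ⟨hη0, hη1⟩ := hη
  -- symmetry of the bilinear form
  have hsym : ∀ x y : EuclideanSpace ℝ (Fin dim),
      ⟪x, Matrix.toEuclideanLin H y⟫ = ⟪y, Matrix.toEuclideanLin H x⟫ := by
    intro x y
    have hherm : H.IsHermitian := by
      rwa [Matrix.IsHermitian, Matrix.conjTranspose_eq_transpose_of_trivial]
    rw [← Matrix.isHermitian_iff_isSymmetric.mp hherm x y, real_inner_comm]
  have hqexp : ∀ (t : ℝ) (x y : EuclideanSpace ℝ (Fin dim)),
      ⟪t•x + (1-t)•y, Matrix.toEuclideanLin H (t•x + (1-t)•y)⟫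
        = t^2*⟪x, Matrix.toEuclideanLin H x⟫ + 2*t*(1-t)*⟪x, Matrix.toEuclideanLin H y⟫
          + (1-t)^2*⟪y, Matrix.toEuclideanLin H y⟫ := by
    intro t x y
    simp only [map_add, _root_.map_smul, inner_add_left, inner_add_right,
      real_inner_smul_left, real_inner_smul_right]
    rw [hsym y x]; ring
  have hqsub : ∀ x y : EuclideanSpace ℝ (Fin dim),
      ⟪x - y, Matrix.toEuclideanLin H (x - y)⟫
        = ⟪x, Matrix.toEuclideanLin H x⟫ - 2*⟪x, Matrix.toEuclideanLin H y⟫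
          + ⟪y, Matrix.toEuclideanLin H y⟫ := by
    intro x y
    simp only [map_sub, inner_sub_left, inner_sub_right]
    rw [hsym y x]; ring
  -- strong convexity of Q around the minimizer
  have hsc : ∀ x : EuclideanSpace ℝ (Fin dim),
      c₂/2 * ‖x - pmin‖^2 ≤ Q x - Qstar := by
    intro x
    have hstep : ∀ t : ℝ, 0 < t → t < 1 →
        (1 - t) * (c₂/2 * ‖x - pmin‖^2) ≤ Q x - Qstar := by
      intro t ht0 ht1
      have hg' := hg.2 (Set.mem_univ (w + x)) (Set.mem_univ (w + pmin)) ht0.le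
        (by linarith : (0:ℝ) ≤ 1 - t) (by ring)
      have hptw : t•(w+x) + (1-t)•(w+pmin) = w + (t•x + (1-t)•pmin) := by module
      rw [hptw] at hg'
      simp only [smul_eq_mul] at hg'
      have hlow := hlower (x - pmin)
      have hQz := hQ (t•x + (1-t)•pmin)
      have hQx := hQ x
      have hQp := hQ pmin
      have hmin := hlb (t•x + (1-t)•pmin)
      have hq2 := hqsub x pmin
      have hlin : ⟪gradfw, t•x + (1-t)•pmin⟫
          = t*⟪gradfw,x⟫ + (1-t)*⟪gradfw,pmin⟫ := by
        rw [inner_add_right, real_inner_smul_right, real_inner_smul_right]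
      rw [hqexp t x pmin, hlin] at hQz
      have h1 : Qstar ≤ t * Q x + (1 - t) * Q pmin
          - (t*(1-t)/2) * ⟪x - pmin, Matrix.toEuclideanLin H (x - pmin)⟫ := by
        rw [hQz] at hmin
        rw [hQx, hQp, hq2]
        linarith [hmin, hg']
      have htt : 0 ≤ t*(1-t)/2 := by nlinarith
      have h2 : t * ((1-t) * (c₂/2 * ‖x - pmin‖^2)) ≤ t * (Q x - Qstar) := by
        have hmul := mul_le_mul_of_nonneg_left hlow htt
        rw [hatt] at h1
        linarith [hmul, h1]
      exact le_of_mul_le_mul_left h2 ht0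
    by_contra hcon
    push_neg at hcon
    set A := Q x - Qstar with hA
    set B := c₂/2 * ‖x - pmin‖^2 with hB
    have hA0 : 0 ≤ A := by have := hlb x; simp only [hA]; linarith
    have hB0 : 0 < B := lt_of_le_of_lt hA0 hcon
    have ht0 : 0 < (B - A)/(2*B) := div_pos (by linarith) (by linarith)
    have ht1 : (B - A)/(2*B) < 1 := by
      rw [div_lt_one (by linarith)]; linarith
    have h := hstep _ ht0 ht1
    have hid : (1 - ((B-A)/(2*B))) * B = (A+B)/2 := by
      field_simp; ring
    rw [hid] at h; linarith
  -- basic facts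
  have hQ0 : Q 0 = 0 := by
    have h := hQ 0
    simpa using h
  have hQs : Qstar ≤ 0 := by have := hlb 0; rw [hQ0] at this; exact this
  set t := η ^ ((S : ℝ) / 2) with htdef
  have hS2 : (0:ℝ) < (S:ℝ)/2 := by
    have : (1:ℝ) ≤ (S:ℝ) := by exact_mod_cast hS
    linarith
  have ht0 : 0 ≤ t := Real.rpow_nonneg hη0 _
  have ht1 : t < 1 := Real.rpow_lt_one hη0 hη1 hS2
  have ht2 : t^2 = η^S := by
    rw [htdef, ← Real.rpow_natCast η S,
      ← Real.rpow_natCast (η ^ ((S:ℝ)/2)) 2, ← Real.rpow_mul hη0]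
    norm_num
  have hu0 : (0:ℝ) ≤ ‖pmin‖ := norm_nonneg _
  have hv0 : (0:ℝ) ≤ ‖p - pmin‖ := norm_nonneg _
  have hn0 : (0:ℝ) ≤ ‖p‖ := norm_nonneg _
  have ha1 : c₂/2 * ‖pmin‖^2 ≤ -Qstar := by
    have h := hsc 0
    rw [zero_sub, norm_neg, hQ0] at h
    linarith
  have ha2 : c₂/2 * ‖p - pmin‖^2 ≤ t^2 * (-Qstar) := by
    have h1 := hsc p
    have h2 := hinexact
    rw [hQ0] at h2
    rw [ht2]
    nlinarith [h1, h2]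
  have hn : ‖p‖ ≤ ‖pmin‖ + ‖p - pmin‖ := by
    have := norm_sub_norm_le p pmin
    linarith
  have hn2 : ‖p‖^2 ≤ (‖pmin‖ + ‖p - pmin‖)^2 := by nlinarith
  -- key bound: c₂‖p‖² ≤ 2(-Qstar)(1+t)²
  have hkey : c₂ * ‖p‖^2 ≤ 2*(-Qstar)*(1+t)^2 := by
    rcases eq_or_lt_of_le ht0 with h0 | h0
    · have ha2' : c₂/2 * ‖p - pmin‖^2 ≤ 0 := by
        rw [← h0] at ha2; simpa using ha2
      have hv2 : ‖p - pmin‖^2 = 0 :=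
        le_antisymm (by nlinarith) (sq_nonneg _)
      have hveq : ‖p - pmin‖ = 0 := by
        exact pow_eq_zero_iff (by norm_num) |>.mp hv2
      rw [hveq, add_zero] at hn
      rw [← h0]
      nlinarith [mul_le_mul hn hn hn0 hu0, ha1]
    · have hA1t : 0 ≤ t * (-Qstar - c₂/2 * ‖pmin‖^2) :=
        mul_nonneg h0.le (by linarith)
      have hA2t : 0 ≤ t * (t^2 * (-Qstar) - c₂/2 * ‖p - pmin‖^2) :=
        mul_nonneg h0.le (by linarith)
      have hA4 : 0 ≤ t * t * (-Qstar - c₂/2 * ‖pmin‖^2) :=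
        mul_nonneg (mul_nonneg h0.le h0.le) (by linarith)
      have hA3 : 0 ≤ c₂ * (t*‖pmin‖ - ‖p - pmin‖)^2 :=
        mul_nonneg hc₂.le (sq_nonneg _)
      have hmul : t * c₂ * ‖p‖^2 ≤ t * c₂ * (‖pmin‖ + ‖p - pmin‖)^2 :=
        mul_le_mul_of_nonneg_left hn2 (mul_nonneg h0.le hc₂.le)
      nlinarith [h0, hmul, hA1t, hA2t, hA4, hA3, ha2]
  -- final
  have hΔle : Δ ≤ -(1 - t^2)*(-Qstar) - c₂/2*‖p‖^2 := by
    have hQp := hQ p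
    have h2 : Q p ≤ -(1 - t^2)*(-Qstar) := by
      rw [hQ0] at hinexact; rw [← ht2] at hinexact; nlinarith [hinexact]
    have h3 := hlower p
    rw [hΔ]; linarith
  have hpos : (0:ℝ) < 1 + t := by linarith
  rw [le_div_iff₀ hpos]
  nlinarith [mul_le_mul_of_nonneg_right hΔle hpos.le,
    mul_le_mul_of_nonneg_left hkey (show (0:ℝ) ≤ (1-t)/2 by linarith)]
end
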